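/- For every ε > 0 there exists a constant c > 0 (depending only on p and ε) such that |P_n(1+ε)| ≥ c·(1 + σ^{−1}·√(2ε))^n for all n ≥ 0. -/

import Mathlib

lemma kl1 (y : ℝ) (hy : 0 ≤ y) : ∀ k : ℕ, 1 ≤ k →
    1 + y^3 ≤ (1+y)^k * (1 - k*y + k*(k+1)*y^2/2) := by
  intro k hk
  induction k, hk using Nat.le_induction with
  | base => push_cast; nlinarith
  | succ k hk ih =>
    have h1 : ((1:ℝ)+y)^(k+1) * (1 - (↑(k+1))*y + (↑(k+1))*(↑(k+1)+1)*y^2/2)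
        = (1+y)^k * (1 - k*y + k*(k+1)*y^2/2)
          + (1+y)^k * ((k+1)*(k+2)/2*y^3) := by
      push_cast; ring
    have h2 : (0:ℝ) ≤ (1+y)^k * ((k+1)*(k+2)/2*y^3) := by positivity
    rw [h1]; push_cast at ih ⊢; linarith

lemma sum_split (m : ℕ) (hm : 2 ≤ m) (f : ℕ → ℝ) :
    ∑ j ∈ Finset.range (m+1), f j = f 0 + f 1 + ∑ j ∈ Finset.Icc 2 m, f j := by
  have h1 : Finset.range (m+1) = Finset.Ico 0 (m+1) := by rw [Finset.range_eq_Ico]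
  have h2 : (∑ j ∈ Finset.Ico 0 2, f j) + ∑ j ∈ Finset.Ico 2 (m+1), f j
      = ∑ j ∈ Finset.Ico 0 (m+1), f j :=
    Finset.sum_Ico_consecutive f (by omega) (by omega)
  have h3 : ∑ j ∈ Finset.Ico 0 2, f j = f 0 + f 1 := by
    rw [show Finset.Ico 0 2 = ({0,1} : Finset ℕ) from rfl]
    simp [Finset.sum_insert, Finset.sum_singleton]
  have h4 : Finset.Ico 2 (m+1) = Finset.Icc 2 m := by rw [Finset.Ico_add_one_right_eq_Icc]
  rw [h1, ← h2, h3, h4]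

set_option maxHeartbeats 1000000 in
/-- For every ε > 0 there exists a constant c > 0 (depending only on p and ε)
such that |P_n(1+ε)| ≥ c·(1 + σ^{−1}·√(2ε))^n for all n ≥ 0. -/
theorem stmt_6
    (m : ℕ) (hm : 2 ≤ m)
    (p : ℕ → ℝ)
    (hp_nonneg : ∀ j, 0 ≤ p j)
    (hp_sum : ∑ j ∈ Finset.range (m + 1), p j = 1)
    (hp0 : 0 < p 0)
    (hp1 : p 1 = 0)
    (hmean : ∑ j ∈ Finset.range (m + 1), (1 - (j : ℝ)) * p j = 0)
    (σ : ℝ)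
    (hσ : σ = Real.sqrt (∑ j ∈ Finset.range (m + 1), (1 - (j : ℝ)) ^ 2 * p j))
    (P : ℕ → ℂ → ℂ)
    (hPinit : ∀ k, k < m → ∀ z : ℂ, P k z = z ^ k)
    (hPrec : ∀ k, m - 1 ≤ k → ∀ z : ℂ, P (k + 1) z =
      z / (p 0 : ℂ) * P k z
        - ∑ j ∈ Finset.Icc 2 m, ((p j / p 0 : ℝ) : ℂ) * P (k + 1 - j) z)
    (ε : ℝ) (hε : 0 < ε) :
    ∃ c : ℝ, 0 < c ∧ ∀ n : ℕ,
      c * (1 + σ⁻¹ * Real.sqrt (2 * ε)) ^ n ≤ ‖P n (1 + ε)‖ := by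
  -- basic quantities
  set s2 : ℝ := ∑ j ∈ Finset.range (m + 1), (1 - (j : ℝ)) ^ 2 * p j with hs2def
  have hs2pos : 0 < s2 := by
    have h0 : (1 - ((0:ℕ):ℝ))^2 * p 0 ≤ s2 := by
      apply Finset.single_le_sum (f := fun (j:ℕ) => (1 - (j:ℝ))^2 * p j)
      · intro i _; exact mul_nonneg (sq_nonneg _) (hp_nonneg i)
      · exact Finset.mem_range.2 (by omega)
    have h0' : (0:ℝ) < (1 - ((0:ℕ):ℝ))^2 * p 0 := by norm_num; exact hp0
    exact lt_of_lt_of_le h0' h0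
  have hσpos : 0 < σ := by rw [hσ]; exact Real.sqrt_pos.2 hs2pos
  have hσsq : σ^2 = s2 := by rw [hσ]; exact Real.sq_sqrt hs2pos.le
  set x : ℝ := σ⁻¹ * Real.sqrt (2 * ε) with hxdef
  have hxpos : 0 < x := by
    apply mul_pos (inv_pos.2 hσpos) (Real.sqrt_pos.2 (by linarith))
  have hx2 : s2 * x^2 = 2 * ε := by
    have h1 : Real.sqrt (2*ε)^2 = 2*ε := Real.sq_sqrt (by linarith)
    have hσne : σ ≠ 0 := hσpos.ne'
    have h2 : x^2 = (2*ε)/σ^2 := by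
      rw [hxdef, mul_pow, h1, inv_pow, div_eq_mul_inv, mul_comm]
    rw [h2, hσsq]
    field_simp
  -- sum identities
  have A1 : ∑ j ∈ Finset.Icc 2 m, p j = 1 - p 0 := by
    have := sum_split m hm p
    rw [hp_sum] at this; rw [hp1] at this; linarith
  have A2 : ∑ j ∈ Finset.Icc 2 m, ((j:ℝ) - 1) * p j = p 0 := by
    have h := sum_split m hm (fun j => (1 - (j:ℝ)) * p j)
    rw [hmean] at h
    simp only [Nat.cast_zero, Nat.cast_one, hp1] at h
    have h2 : ∑ j ∈ Finset.Icc 2 m, ((j:ℝ) - 1) * p j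
        = - ∑ j ∈ Finset.Icc 2 m, (1 - (j:ℝ)) * p j := by
      rw [← Finset.sum_neg_distrib]
      exact Finset.sum_congr rfl (fun j _ => by ring)
    rw [h2]; linarith
  have A3 : ∑ j ∈ Finset.Icc 2 m, ((j:ℝ) - 1)^2 * p j = s2 - p 0 := by
    have h := sum_split m hm (fun j => (1 - (j:ℝ))^2 * p j)
    rw [← hs2def] at h
    simp only [Nat.cast_zero, Nat.cast_one, hp1] at h
    have h2 : ∑ j ∈ Finset.Icc 2 m, ((j:ℝ) - 1)^2 * p j
        = ∑ j ∈ Finset.Icc 2 m, (1 - (j:ℝ))^2 * p j := by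
      exact Finset.sum_congr rfl (fun j _ => by ring)
    rw [h2]; rw [h]; ring_nf
  have hw : 0 < 1 - p 0 := by
    have hle : p 0 ≤ ((m:ℝ) - 1) * (1 - p 0) := by
      calc p 0 = ∑ j ∈ Finset.Icc 2 m, ((j:ℝ) - 1) * p j := A2.symm
        _ ≤ ∑ j ∈ Finset.Icc 2 m, ((m:ℝ) - 1) * p j := by
            apply Finset.sum_le_sum
            intro j hj
            obtain ⟨hj2, hjm⟩ := Finset.mem_Icc.1 hj
            have : (j:ℝ) ≤ m := by exact_mod_cast hjm
            have := hp_nonneg j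
            nlinarith
        _ = ((m:ℝ) - 1) * (1 - p 0) := by rw [← Finset.mul_sum, A1]
    have hm1 : (2:ℝ) ≤ m := by exact_mod_cast hm
    nlinarith
  -- the target growth rate
  set lam : ℝ := 1 + x with hlamdef
  have hlam1 : 1 < lam := by rw [hlamdef]; linarith
  set M : ℝ := (1 + x)^(m-1) with hMdef
  have hMpos : 0 < M := by rw [hMdef]; positivity
  -- termwise bound for the characteristic sum
  have hterm : ∀ u : ℝ, 1 ≤ u → u ≤ lam → ∀ j ∈ Finset.Icc 2 m,
      p j / u^(j-1) ≤ p j * (1 - ((j:ℝ)-1)*(u-1) + ((j:ℝ)-1)*(j:ℝ)*(u-1)^2/2 - (u-1)^3/M) := by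
    intro u hu1 hulam j hj
    obtain ⟨hj2, hjm⟩ := Finset.mem_Icc.1 hj
    set y : ℝ := u - 1 with hydef
    have hy0 : 0 ≤ y := by rw [hydef]; linarith
    have hu_eq : u = 1 + y := by rw [hydef]; ring
    have hyx : y ≤ x := by rw [hydef]; rw [hlamdef] at hulam; linarith
    have hkl := kl1 y hy0 (j-1) (by omega)
    have hcast : ((j-1:ℕ):ℝ) = (j:ℝ)-1 := by
      rw [Nat.cast_sub (by omega : 1 ≤ j)]; norm_num
    rw [hcast] at hkl
    have hEq : (1 - ((j:ℝ)-1)*y + ((j:ℝ)-1)*((j:ℝ)-1+1)*y^2/2)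
        = (1 - ((j:ℝ)-1)*y + ((j:ℝ)-1)*(j:ℝ)*y^2/2) := by ring
    rw [hEq] at hkl
    have hPpos : (0:ℝ) < (1+y)^(j-1) := by positivity
    have hPleM : (1+y)^(j-1) ≤ M := by
      rw [hMdef]
      calc (1+y)^(j-1) ≤ (1+x)^(j-1) :=
            pow_le_pow_left₀ (by linarith) (by linarith) _
        _ ≤ (1+x)^(m-1) := pow_le_pow_right₀ (by linarith) (by omega)
    have hinv : 1/(1+y)^(j-1)
        ≤ (1 - ((j:ℝ)-1)*y + ((j:ℝ)-1)*(j:ℝ)*y^2/2) - y^3/M := by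
      have hA : (1 + y^3)/(1+y)^(j-1)
          ≤ 1 - ((j:ℝ)-1)*y + ((j:ℝ)-1)*(j:ℝ)*y^2/2 :=
        (div_le_iff₀ hPpos).2 (by rw [mul_comm]; exact hkl)
      have hB : y^3/M ≤ y^3/(1+y)^(j-1) := by
        apply div_le_div_of_nonneg_left (by positivity) hPpos hPleM
      have hC : (1+y^3)/(1+y)^(j-1) = 1/(1+y)^(j-1) + y^3/(1+y)^(j-1) := by
        rw [add_div]
      linarith
    calc p j / u^(j-1) = p j * (1/(1+y)^(j-1)) := by rw [hu_eq]; ring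
      _ ≤ p j * ((1 - ((j:ℝ)-1)*y + ((j:ℝ)-1)*(j:ℝ)*y^2/2) - y^3/M) :=
          mul_le_mul_of_nonneg_left hinv (hp_nonneg j)
      _ = p j * (1 - ((j:ℝ)-1)*y + ((j:ℝ)-1)*(j:ℝ)*y^2/2 - y^3/M) := by ring
  -- the key inequality on the characteristic sum
  have KL3 : ∀ u : ℝ, 1 ≤ u → u ≤ lam →
      p 0 * u + ∑ j ∈ Finset.Icc 2 m, p j / u^(j-1)
        ≤ 1 + s2*(u-1)^2/2 - (1 - p 0)*(u-1)^3/M := by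
    intro u hu1 hulam
    have hsum : ∑ j ∈ Finset.Icc 2 m, p j / u^(j-1)
        ≤ ∑ j ∈ Finset.Icc 2 m,
            p j * (1 - ((j:ℝ)-1)*(u-1) + ((j:ℝ)-1)*(j:ℝ)*(u-1)^2/2 - (u-1)^3/M) :=
      Finset.sum_le_sum (hterm u hu1 hulam)
    have hsum3 : ∑ j ∈ Finset.Icc 2 m, ((j:ℝ)-1)*(j:ℝ) * p j = s2 := by
      have he : ∀ j ∈ Finset.Icc 2 m,
          ((j:ℝ)-1)*(j:ℝ)*p j = ((j:ℝ)-1)^2*p j + (((j:ℝ)-1)*p j) :=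
        fun j _ => by ring
      rw [Finset.sum_congr rfl he, Finset.sum_add_distrib, A3, A2]; ring
    have hexp : ∑ j ∈ Finset.Icc 2 m,
          p j * (1 - ((j:ℝ)-1)*(u-1) + ((j:ℝ)-1)*(j:ℝ)*(u-1)^2/2 - (u-1)^3/M)
        = (∑ j ∈ Finset.Icc 2 m, p j)
          - (∑ j ∈ Finset.Icc 2 m, ((j:ℝ)-1)*p j)*(u-1)
          + (∑ j ∈ Finset.Icc 2 m, ((j:ℝ)-1)*(j:ℝ)*p j)*((u-1)^2/2)
          - (∑ j ∈ Finset.Icc 2 m, p j)*((u-1)^3/M) := by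
      rw [Finset.sum_mul, Finset.sum_mul, Finset.sum_mul,
        ← Finset.sum_sub_distrib, ← Finset.sum_add_distrib, ← Finset.sum_sub_distrib]
      exact Finset.sum_congr rfl (fun j _ => by ring)
    rw [hexp, A1, A2, hsum3] at hsum
    have halign : 1 - p 0 - p 0 * (u - 1) + s2 * ((u - 1) ^ 2 / 2) - (1 - p 0) * ((u - 1) ^ 3 / M)
        = 1 - p 0 - p 0 * (u - 1) + s2 * (u - 1) ^ 2 / 2 - (1 - p 0) * (u - 1) ^ 3 / M := by ring
    rw [halign] at hsum
    linarith [hsum]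
  -- the uniform gap
  set δ0 : ℝ := min (3*ε/4) ((1-p 0)*x^3/(8*M)) with hδ0def
  have hδ0pos : 0 < δ0 := lt_min (by linarith) (by
    apply div_pos (mul_pos hw (by positivity)) (by positivity))
  have hgap : ∀ u, 1 ≤ u → u ≤ lam →
      p 0 * u + (∑ j ∈ Finset.Icc 2 m, p j / u^(j-1)) + δ0 ≤ 1 + ε := by
    intro u hu1 hulam
    have h3 := KL3 u hu1 hulam
    have hy0 : (0:ℝ) ≤ u - 1 := by linarith
    have hyx : u - 1 ≤ x := by rw [hlamdef] at hulam; linarith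
    rcases le_or_gt (u-1) (x/2) with hc | hc
    · have hq1 : (u-1)^2 ≤ (x/2)^2 := by nlinarith
      have hq2 : s2*(u-1)^2 ≤ s2*(x/2)^2 := mul_le_mul_of_nonneg_left hq1 hs2pos.le
      have hq3 : s2*(x/2)^2 = (2*ε)/4 := by rw [show s2*(x/2)^2 = s2*x^2/4 by ring, hx2]
      have h5 : 0 ≤ (1-p 0)*(u-1)^3/M := by
        apply div_nonneg (by positivity) hMpos.le
      have h6 : δ0 ≤ 3*ε/4 := min_le_left _ _
      linarith
    · have hq1 : (u-1)^2 ≤ x^2 := by nlinarith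
      have hq2 : s2*(u-1)^2 ≤ s2*x^2 := mul_le_mul_of_nonneg_left hq1 hs2pos.le
      have h5 : (1-p 0)*x^3/(8*M) ≤ (1-p 0)*(u-1)^3/M := by
        have hcube : x^3/8 ≤ (u-1)^3 := by
          have h := pow_le_pow_left₀ (by linarith : (0:ℝ) ≤ x/2) hc.le 3
          calc x^3/8 = (x/2)^3 := by ring
            _ ≤ (u-1)^3 := h
        calc (1-p 0)*x^3/(8*M) = (1-p 0)*(x^3/8)/M := by ring
          _ ≤ (1-p 0)*(u-1)^3/M := by
              apply div_le_div_of_nonneg_right ?_ hMpos.le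
              exact mul_le_mul_of_nonneg_left hcube hw.le
      have h6 : δ0 ≤ (1-p 0)*x^3/(8*M) := min_le_right _ _
      linarith [hx2]
  -- realness of the sequence at z = 1 + ε
  set zc : ℂ := 1 + (ε:ℂ) with hzcdef
  have hzc_real : zc = ((1+ε : ℝ) : ℂ) := by rw [hzcdef]; push_cast; ring
  set q : ℕ → ℝ := fun n => (P n zc).re with hqdef
  have him : ∀ n, (P n zc).im = 0 := by
    intro n
    induction n using Nat.strong_induction_on with
    | _ n ih =>
      by_cases hn : n < m
      · rw [hPinit n hn, hzc_real, ← Complex.ofReal_pow]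
        exact Complex.ofReal_im _
      · obtain ⟨k, rfl⟩ : ∃ k, n = k + 1 := ⟨n - 1, by omega⟩
        have hk : m - 1 ≤ k := by omega
        rw [hPrec k hk zc]
        rw [Complex.sub_im]
        have hzdiv : zc / (p 0 : ℂ) = (((1+ε)/p 0 : ℝ) : ℂ) := by
          rw [hzc_real, Complex.ofReal_div]
        have h1 : (zc / (p 0 : ℂ) * P k zc).im = 0 := by
          rw [hzdiv]
          simp [Complex.mul_im, ih k (by omega)]
        have h2 : (∑ j ∈ Finset.Icc 2 m, ((p j / p 0 : ℝ) : ℂ) * P (k + 1 - j) zc).im = 0 := by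
          rw [Complex.im_sum]
          apply Finset.sum_eq_zero
          intro j hj
          obtain ⟨hj2, hjm⟩ := Finset.mem_Icc.1 hj
          simp [Complex.mul_im, ih (k + 1 - j) (by omega)]
        rw [h1, h2]; ring
  have hqc : ∀ n, P n zc = ((q n : ℝ) : ℂ) := by
    intro n
    apply Complex.ext
    · simp [hqdef]
    · rw [him n, Complex.ofReal_im]
  have hqinit : ∀ n, n < m → q n = (1+ε)^n := by
    intro n hn
    have h := hPinit n hn zc
    rw [hqc n] at h
    rw [hzc_real, ← Complex.ofReal_pow] at h
    exact_mod_cast h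
  have hqrec : ∀ k, m - 1 ≤ k →
      p 0 * q (k+1) = (1+ε) * q k - ∑ j ∈ Finset.Icc 2 m, p j * q (k+1-j) := by
    intro k hk
    have h := hPrec k hk zc
    simp only [hqc] at h
    have hp0c : ((p 0 : ℝ) : ℂ) ≠ 0 := by
      exact_mod_cast hp0.ne'
    have h2 : ((p 0 : ℝ) : ℂ) * ((q (k+1) : ℝ) : ℂ)
        = ((1+ε : ℝ) : ℂ) * ((q k : ℝ) : ℂ)
          - ∑ j ∈ Finset.Icc 2 m, ((p j : ℝ) : ℂ) * ((q (k+1-j) : ℝ) : ℂ) := by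
      rw [h, hzc_real, mul_sub, Finset.mul_sum]
      congr 1
      · field_simp
      · apply Finset.sum_congr rfl
        intro j hj
        rw [Complex.ofReal_div]
        field_simp
    exact_mod_cast h2
  -- positivity and monotonicity of q
  have hqpm : ∀ n : ℕ, 0 < q n ∧ ∀ a, a ≤ n → q a ≤ q n := by
    intro n
    induction n using Nat.strong_induction_on with
    | _ n ih =>
      by_cases hn : n < m
      · constructor
        · rw [hqinit n hn]; positivity
        · intro a ha
          rw [hqinit n hn, hqinit a (by omega)]
          exact pow_le_pow_right₀ (by linarith) ha
      · push_neg at hn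
        obtain ⟨k, rfl⟩ : ∃ k, n = k + 1 := ⟨n - 1, by omega⟩
        have hk : m - 1 ≤ k := by omega
        have hrec := hqrec k hk
        have hkpos := (ih k (by omega)).1
        have hsum : ∑ j ∈ Finset.Icc 2 m, p j * q (k+1-j)
            ≤ ∑ j ∈ Finset.Icc 2 m, p j * q k := by
          apply Finset.sum_le_sum
          intro j hj
          obtain ⟨hj2, hjm⟩ := Finset.mem_Icc.1 hj
          exact mul_le_mul_of_nonneg_left
            ((ih k (by omega)).2 (k+1-j) (by omega)) (hp_nonneg j)
        have hsumval : ∑ j ∈ Finset.Icc 2 m, p j * q k = (1 - p 0) * q k := by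
          rw [← Finset.sum_mul, A1]
        have hge : p 0 * q k ≤ p 0 * q (k+1) := by
          nlinarith [hrec, hsum, hsumval, mul_pos hε hkpos]
        have hq1 : q k ≤ q (k+1) := le_of_mul_le_mul_left hge hp0
        constructor
        · exact lt_of_lt_of_le hkpos hq1
        · intro a ha
          rcases Nat.lt_or_ge a (k+1) with h | h
          · exact le_trans ((ih k (by omega)).2 a (by omega)) hq1
          · have haa : a = k+1 := by omega
            rw [haa]
  have hq_nonneg : ∀ n, 0 ≤ q n := fun n => (hqpm n).1.le
  -- rate propagation
  have hrate : ∀ (μ : ℝ), 0 ≤ μ → ∀ N, (∀ n, N ≤ n → μ * q n ≤ q (n+1)) →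
      ∀ a, N ≤ a → ∀ d, q a * μ^d ≤ q (a+d) := by
    intro μ hμ N hr a ha d
    induction d with
    | zero => simp
    | succ d ihd =>
      have h1 : q a * μ^(d+1) = (q a * μ^d) * μ := by ring
      show q a * μ^(d+1) ≤ q ((a+d)+1)
      rw [h1]
      calc (q a * μ^d) * μ ≤ q (a+d) * μ := mul_le_mul_of_nonneg_right ihd hμ
        _ = μ * q (a+d) := mul_comm _ _
        _ ≤ q ((a+d)+1) := hr (a+d) (by omega)
  -- the bootstrap map
  set F : ℝ → ℝ := fun μ => ((1+ε) - ∑ j ∈ Finset.Icc 2 m, p j / μ^(j-1)) / p 0 with hFdef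
  have hFapp : ∀ μ : ℝ, F μ
      = ((1+ε) - ∑ j ∈ Finset.Icc 2 m, p j / μ^(j-1)) / p 0 := fun μ => by rw [hFdef]
  have hboot : ∀ μ, 1 ≤ μ → ∀ N, (∀ n, N ≤ n → μ * q n ≤ q (n+1)) →
      ∀ n, N + m ≤ n → F μ * q n ≤ q (n+1) := by
    intro μ hμ N hr n hn
    have hrec := hqrec n (by omega)
    have hsum : ∑ j ∈ Finset.Icc 2 m, p j * q (n+1-j)
        ≤ (∑ j ∈ Finset.Icc 2 m, p j / μ^(j-1)) * q n := by
      rw [Finset.sum_mul]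
      apply Finset.sum_le_sum
      intro j hj
      obtain ⟨hj2, hjm⟩ := Finset.mem_Icc.1 hj
      have hμp : (0:ℝ) < μ^(j-1) := by positivity
      have h1 := hrate μ (by linarith) N hr (n+1-j) (by omega) (j-1)
      rw [show n+1-j + (j-1) = n by omega] at h1
      have h2 : q (n+1-j) ≤ q n / μ^(j-1) := (le_div_iff₀ hμp).2 h1
      calc p j * q (n+1-j) ≤ p j * (q n / μ^(j-1)) :=
            mul_le_mul_of_nonneg_left h2 (hp_nonneg j)
        _ = p j / μ^(j-1) * q n := by ring
    have hFval : p 0 * (F μ * q n)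
        = (1+ε) * q n - (∑ j ∈ Finset.Icc 2 m, p j / μ^(j-1)) * q n := by
      rw [hFapp]
      field_simp
    have hle : p 0 * (F μ * q n) ≤ p 0 * q (n+1) := by linarith [hrec, hsum, hFval]
    exact le_of_mul_le_mul_left hle hp0
  have hFmono : ∀ a b : ℝ, 1 ≤ a → a ≤ b → F a ≤ F b := by
    intro a b ha hab
    rw [hFapp, hFapp]
    apply div_le_div_of_nonneg_right ?_ hp0.le
    have hs : ∑ j ∈ Finset.Icc 2 m, p j / b^(j-1)
        ≤ ∑ j ∈ Finset.Icc 2 m, p j / a^(j-1) := by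
      apply Finset.sum_le_sum
      intro j hj
      exact div_le_div_of_nonneg_left (hp_nonneg j) (pow_pos (by linarith) _)
        (pow_le_pow_left₀ (by linarith) hab _)
    linarith
  have hF1 : F 1 = 1 + ε/p 0 := by
    rw [hFapp]
    simp only [one_pow, div_one]
    rw [A1]
    field_simp
    ring
  set δ1 : ℝ := δ0 / p 0 with hδ1def
  have hδ1pos : 0 < δ1 := div_pos hδ0pos hp0
  have hgapF : ∀ u, 1 ≤ u → u ≤ lam → u + δ1 ≤ F u := by
    intro u h1 h2
    rw [hFapp]
    have hg := hgap u h1 h2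
    have heq : (u + δ1) * p 0 = p 0 * u + δ0 := by
      rw [hδ1def]; field_simp
    rw [le_div_iff₀ hp0, heq]
    linarith [hg]
  -- iterate the bootstrap
  set μseq : ℕ → ℝ := fun t => F^[t] 1 with hμdef
  have hμ0 : μseq 0 = 1 := rfl
  have hμsucc : ∀ t, μseq (t+1) = F (μseq t) := fun t => by
    rw [hμdef]; exact Function.iterate_succ_apply' F t 1
  have hμ1 : ∀ t, 1 ≤ μseq t := by
    intro t
    induction t with
    | zero => rw [hμ0]
    | succ t iht =>
      rw [hμsucc t]
      calc (1:ℝ) ≤ 1 + ε/p 0 := le_add_of_nonneg_right (div_nonneg hε.le hp0.le)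
        _ = F 1 := hF1.symm
        _ ≤ F (μseq t) := hFmono 1 (μseq t) le_rfl iht
  have hμrate : ∀ t, ∀ n, t*m ≤ n → μseq t * q n ≤ q (n+1) := by
    intro t
    induction t with
    | zero => intro n _; rw [hμ0, one_mul]; exact (hqpm (n+1)).2 n (by omega)
    | succ t iht =>
      intro n hn
      rw [hμsucc t]
      have hsm : (t+1)*m = t*m + m := Nat.succ_mul t m
      exact hboot (μseq t) (hμ1 t) (t*m) iht n (by omega)
  have hescape : ∃ t, lam ≤ μseq t := by
    obtain ⟨t, ht⟩ := exists_nat_ge ((lam - 1)/δ1)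
    have hstep : ∀ s : ℕ, lam ≤ μseq s ∨ 1 + s*δ1 ≤ μseq s := by
      intro s
      induction s with
      | zero => right; rw [hμ0]; norm_num
      | succ s ihs =>
        rcases le_or_gt lam (μseq s) with hcs | hcs
        · left
          rw [hμsucc s]
          calc lam ≤ lam + δ1 := by linarith
            _ ≤ F lam := hgapF lam (by linarith) le_rfl
            _ ≤ F (μseq s) := hFmono lam (μseq s) hlam1.le hcs
        · rcases ihs with h | h
          · exact absurd h (not_le.2 hcs)
          · right
            rw [hμsucc s]
            have hg := hgapF (μseq s) (hμ1 s) hcs.le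
            push_cast
            linarith [hg, h]
    rcases hstep t with h | h
    · exact ⟨t, h⟩
    · refine ⟨t, ?_⟩
      rw [div_le_iff₀ hδ1pos] at ht
      linarith [h, ht]
  -- final assembly
  obtain ⟨t, hlamle⟩ := hescape
  set N := t*m with hNdef
  have hrateL : ∀ n, N ≤ n → lam * q n ≤ q (n+1) := by
    intro n hn
    calc lam * q n ≤ μseq t * q n := mul_le_mul_of_nonneg_right hlamle (hq_nonneg n)
      _ ≤ q (n+1) := hμrate t n hn
  have hlampos : (0:ℝ) < lam := by linarith
  have hpowN : ∀ d, q N * lam^d ≤ q (N+d) := hrate lam hlampos.le N hrateL N le_rfl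
  have hne : (Finset.range (N+1)).Nonempty := ⟨0, Finset.mem_range.2 (by omega)⟩
  set c : ℝ := (Finset.range (N+1)).inf' hne (fun n => q n / lam^n) with hcdef
  have hcpos : 0 < c := by
    rw [hcdef, Finset.lt_inf'_iff]
    intro i _
    exact div_pos (hqpm i).1 (pow_pos hlampos i)
  have hcle : ∀ n, n ≤ N → c * lam^n ≤ q n := by
    intro n hn
    have h1 : c ≤ q n / lam^n := by
      rw [hcdef]
      exact Finset.inf'_le _ (Finset.mem_range.2 (by omega))
    rw [le_div_iff₀ (pow_pos hlampos n)] at h1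
    exact h1
  have hfinal : ∀ n, c * lam^n ≤ q n := by
    intro n
    rcases le_or_gt n N with h | h
    · exact hcle n h
    · obtain ⟨d, rfl⟩ : ∃ d, n = N + d := ⟨n - N, by omega⟩
      have h1 : c * lam^N ≤ q N := hcle N le_rfl
      calc c * lam^(N+d) = (c * lam^N) * lam^d := by rw [pow_add]; ring
        _ ≤ q N * lam^d := mul_le_mul_of_nonneg_right h1 (pow_nonneg hlampos.le d)
        _ ≤ q (N+d) := hpowN d
  refine ⟨c, hcpos, fun n => ?_⟩
  rw [hqc n, Complex.norm_real, Real.norm_eq_abs]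
  calc c * lam^n ≤ q n := hfinal n
    _ ≤ |q n| := le_abs_self _
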